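/- Let φ₁, φ₂, f, g ∈ 𝒮(ℝⁿ) (Schwartz functions). Then the 2n-dimensional Fourier transform of the product conj(V_{φ₁} f) · V_{φ₂} g, evaluated at (η, y), equals e^(−i⟨y,η⟩) V_{φ₂} φ₁(y, −η) · V_f g(−y, η). -/

import Mathlib

open MeasureTheory ComplexConjugate in
/-- Short-time Fourier transform `V_φ f(x, ξ)` on `ℝⁿ`. -/
noncomputable def STFT {n : ℕ} (φ f : EuclideanSpace ℝ (Fin n) → ℂ)
    (x ξ : EuclideanSpace ℝ (Fin n)) : ℂ :=
  ((2 * Real.pi) ^ (-(n : ℝ) / 2) : ℝ) *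
    ∫ y : EuclideanSpace ℝ (Fin n),
      f y * conj (φ (y - x)) * Complex.exp (-Complex.I * ((inner ℝ y ξ : ℝ) : ℂ))

namespace STFTProof

open MeasureTheory ComplexConjugate SchwartzMap FourierTransform RealInnerProductSpace

/-- `e^{ir}` helper. -/
noncomputable def ec (r : ℝ) : ℂ := Complex.exp ((r : ℂ) * Complex.I)

@[simp] lemma norm_ec (r : ℝ) : ‖ec r‖ = 1 := by
  simpa [ec] using Complex.norm_exp_ofReal_mul_I r

lemma ec_add (r s : ℝ) : ec (r + s) = ec r * ec s := by
  rw [ec, ec, ec, ← Complex.exp_add]; push_cast; ring_nf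

@[simp] lemma ec_zero : ec 0 = 1 := by simp [ec]

@[simp] lemma conj_ec (r : ℝ) : conj (ec r) = ec (-r) := by
  rw [ec, ec, ← Complex.exp_conj]
  congr 1
  simp [Complex.conj_I]

lemma exp_neg_I_mul (r : ℝ) : Complex.exp (-Complex.I * (r : ℂ)) = ec (-r) := by
  rw [ec]; push_cast; ring_nf

lemma exp_neg_I_mul_neg (r : ℝ) : Complex.exp (-Complex.I * -(r : ℂ)) = ec r := by
  rw [ec]; ring_nf

lemma exp_I_mul (r : ℝ) : Complex.exp (Complex.I * (r : ℂ)) = ec r := by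
  rw [ec]; ring_nf

lemma exp_sub_I_mul (r s : ℝ) :
    Complex.exp (-Complex.I * (r : ℂ) - Complex.I * (s : ℂ)) = ec (-r) * ec (-s) := by
  rw [ec, ec, ← Complex.exp_add]
  congr 1
  push_cast
  ring

lemma continuous_ec : Continuous ec := by
  unfold ec; fun_prop

lemma schwartz_hasTemperateGrowth {D F : Type*} [NormedAddCommGroup D] [NormedSpace ℝ D]
    [NormedAddCommGroup F] [NormedSpace ℝ F] (f : 𝓢(D, F)) :
    Function.HasTemperateGrowth ⇑f :=
  ⟨f.smooth', fun k => ⟨0, SchwartzMap.seminorm ℝ 0 k f, fun x => by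
    simpa using f.norm_iteratedFDeriv_le_seminorm ℝ k x⟩⟩

variable {n : ℕ}

local notation "E" => EuclideanSpace ℝ (Fin n)

lemma tg_sub (x : E) : Function.HasTemperateGrowth (fun s : E => s - x) := by
  refine Function.HasTemperateGrowth.of_fderiv ?_ (differentiable_id.sub_const x)
    (k := 1) (C := 1 + ‖x‖) (fun s => ?_)
  · have h : (fderiv ℝ (fun s : E => s - x)) = fun _ => ContinuousLinearMap.id ℝ E := by
      ext1 s
      rw [fderiv_sub_const, fderiv_id']
    rw [h]
    exact Function.HasTemperateGrowth.const _
  · have h := norm_sub_le s x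
    have h1 := norm_nonneg s
    have h2 := norm_nonneg x
    nlinarith

/-- translation of a Schwartz function -/
noncomputable def shiftS (x : E) : 𝓢(E, ℂ) →L[ℝ] 𝓢(E, ℂ) :=
  SchwartzMap.compCLM ℝ (tg_sub x) ⟨1, 1 + ‖x‖, fun s => by
    have h : ‖s‖ ≤ ‖s - x‖ + ‖x‖ := by
      simpa using norm_add_le (s - x) x
    have h1 := norm_nonneg (s - x)
    have h2 := norm_nonneg x
    nlinarith⟩

lemma tg_shift (φ : 𝓢(E, ℂ)) (x : E) :
    Function.HasTemperateGrowth (fun s : E => φ (s - x)) := by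
  have h := schwartz_hasTemperateGrowth ((shiftS x) φ)
  have he : ⇑((shiftS x) φ) = fun s : E => φ (s - x) := by
    ext s; rfl
  rwa [he] at h

noncomputable def mulConjCLM : ℂ →L[ℝ] ℂ →L[ℝ] ℂ :=
  ((ContinuousLinearMap.mul ℝ ℂ).flip.comp Complex.conjCLE.toContinuousLinearMap).flip

@[simp] lemma mulConjCLM_apply (a b : ℂ) : mulConjCLM a b = a * conj b := rfl

/-- `t ↦ ψ t * conj (φ (t - x))` as a Schwartz function. -/
noncomputable def wprod (φ ψ : 𝓢(E, ℂ)) (x : E) : 𝓢(E, ℂ) :=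
  SchwartzMap.bilinLeftCLM mulConjCLM (tg_shift φ x) ψ

@[simp] lemma wprod_apply (φ ψ : 𝓢(E, ℂ)) (x t : E) :
    wprod φ ψ x t = ψ t * conj (φ (t - x)) := rfl

/-- unnormalized Fourier transform with kernel `e^{-i⟨t,ξ⟩}` -/
noncomputable def FTu (u : E → ℂ) (ξ : E) : ℂ :=
  ∫ t : E, u t * ec (-⟪t, ξ⟫)

lemma two_pi_pos : (0 : ℝ) < 2 * Real.pi := by positivity

lemma FTu_eq (u : E → ℂ) (ξ : E) :
    FTu u ξ = 𝓕 u ((2 * Real.pi)⁻¹ • ξ) := by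
  rw [Real.fourier_eq, FTu]
  congr 1
  ext t
  rw [Circle.smul_def, Real.fourierChar_apply, mul_comm, ec]
  congr 1
  rw [real_inner_smul_right]
  have h : 2 * Real.pi * -((2 * Real.pi)⁻¹ * ⟪t, ξ⟫) = -⟪t, ξ⟫ := by
    field_simp
  rw [h]

lemma FTu_eq_fun (u : E → ℂ) :
    FTu u = fun ξ => 𝓕 u ((2 * Real.pi)⁻¹ • ξ) := by
  ext ξ; exact FTu_eq _ _

lemma ftu_integrable (u : 𝓢(E, ℂ)) : Integrable (FTu ⇑u) := by
  rw [FTu_eq_fun]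
  exact (integrable_comp_smul_iff volume (𝓕 ⇑u)
    (inv_ne_zero two_pi_pos.ne')).2 (SchwartzMap.fourierTransformCLM ℝ u).integrable

lemma ftu_continuous (u : 𝓢(E, ℂ)) : Continuous (FTu ⇑u) := by
  rw [FTu_eq_fun]
  exact (SchwartzMap.fourierTransformCLM ℝ u).continuous.comp (continuous_const_smul _)

lemma ftu_inversion (u : 𝓢(E, ℂ)) (a : E) :
    ∫ ξ : E, FTu ⇑u ξ * ec ⟪ξ, a⟫ = (((2 * Real.pi) ^ n : ℝ) : ℂ) * u a := by
  have key : ∀ ξ : E, FTu ⇑u ξ * ec ⟪ξ, a⟫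
      = (fun w => 𝓕 ⇑u w * ec (2 * Real.pi * ⟪w, a⟫))
          ((2 * Real.pi)⁻¹ • ξ) := by
    intro ξ
    simp only
    rw [FTu_eq]
    congr 2
    rw [real_inner_smul_left]
    field_simp
  simp_rw [key]
  rw [MeasureTheory.Measure.integral_comp_smul volume
    (fun w => 𝓕 ⇑u w * ec (2 * Real.pi * ⟪w, a⟫)) ((2 * Real.pi)⁻¹)]
  have h2 : ∫ w : E, 𝓕 ⇑u w * ec (2 * Real.pi * ⟪w, a⟫)
      = 𝓕⁻ (𝓕 ⇑u) a := by
    rw [Real.fourierInv_eq']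
    congr 1
    ext w
    rw [smul_eq_mul, mul_comm, ec]
  rw [h2, u.continuous.fourierInv_fourier_eq u.integrable
    (SchwartzMap.fourierTransformCLM ℝ u).integrable]
  rw [finrank_euclideanSpace_fin, inv_pow, inv_inv,
    abs_of_pos (pow_pos two_pi_pos n)]
  rw [Complex.real_smul]

lemma conj_ftu (h : 𝓢(E, ℂ)) (ξ : E) :
    conj (FTu ⇑h ξ) = ∫ t : E, conj (h t) * ec ⟪t, ξ⟫ := by
  rw [FTu, ← integral_conj]
  congr 1
  ext t
  rw [map_mul, conj_ec, neg_neg]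

lemma key_parseval (h k : 𝓢(E, ℂ)) (y : E) :
    ∫ ξ : E, conj (FTu ⇑h ξ) * FTu ⇑k ξ * ec (-⟪ξ, y⟫)
      = (((2 * Real.pi) ^ n : ℝ) : ℂ) * ∫ t : E, conj (h t) * k (t - y) := by
  have step1 : ∀ ξ : E, conj (FTu ⇑h ξ) * FTu ⇑k ξ * ec (-⟪ξ, y⟫)
      = ∫ t : E, conj (h t) * (FTu ⇑k ξ * ec (⟪t, ξ⟫ + -⟪ξ, y⟫)) := by
    intro ξ
    rw [mul_assoc, conj_ftu, ← MeasureTheory.integral_mul_const]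
    congr 1
    ext t
    rw [ec_add]
    ring
  simp_rw [step1]
  have hint : Integrable (Function.uncurry fun (ξ : E) (t : E) =>
      conj (h t) * (FTu ⇑k ξ * ec (⟪t, ξ⟫ + -⟪ξ, y⟫))) (volume.prod volume) := by
    apply Integrable.mono' (g := fun p : E × E => ‖FTu ⇑k p.1‖ * ‖h p.2‖)
    · exact (ftu_integrable k).norm.mul_prod h.integrable.norm
    · apply Continuous.aestronglyMeasurable
      apply Continuous.mul
      · exact Complex.continuous_conj.comp (h.continuous.comp continuous_snd)
      apply Continuous.mul
      · exact (ftu_continuous k).comp continuous_fst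
      · apply continuous_ec.comp
        exact (continuous_inner.comp (continuous_snd.prodMk continuous_fst)).add
          ((continuous_inner.comp (continuous_fst.prodMk continuous_const)).neg)
    · apply Filter.Eventually.of_forall
      intro p
      simp only [Function.uncurry]
      rw [norm_mul, norm_mul, norm_ec, mul_one, RCLike.norm_conj]
      rw [mul_comm]
  rw [MeasureTheory.integral_integral_swap hint]
  have step2 : ∀ t : E, (∫ ξ : E, conj (h t) * (FTu ⇑k ξ * ec (⟪t, ξ⟫ + -⟪ξ, y⟫)))
      = conj (h t) * ((((2 * Real.pi) ^ n : ℝ) : ℂ) * k (t - y)) := by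
    intro t
    rw [MeasureTheory.integral_const_mul]
    congr 1
    have harg : ∀ ξ : E, ⟪t, ξ⟫ + -⟪ξ, y⟫ = ⟪ξ, t - y⟫ := by
      intro ξ
      rw [inner_sub_right, real_inner_comm t ξ]
      ring
    simp_rw [harg]
    exact ftu_inversion k (t - y)
  simp_rw [step2, mul_left_comm]
  rw [MeasureTheory.integral_const_mul]



lemma stft_eq (φ ψ : 𝓢(E, ℂ)) (x ξ : E) :
    STFT ⇑φ ⇑ψ x ξ = (((2 * Real.pi) ^ (-(n : ℝ) / 2) : ℝ) : ℂ) * FTu ⇑(wprod φ ψ x) ξ := by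
  rw [STFT, FTu]
  congr 1
  congr 1
  ext t
  rw [wprod_apply, exp_neg_I_mul]

lemma integral_comp_sub_left (F : E → ℂ) (a : E) :
    ∫ x : E, F (a - x) = ∫ x : E, F x := by
  have h1 : (fun x : E => F (a - x)) = fun x : E => (fun z : E => F (a + z)) (-x) := by
    ext x; rw [sub_eq_add_neg]
  rw [h1, MeasureTheory.integral_neg_eq_self (fun z : E => F (a + z)) volume,
    MeasureTheory.integral_add_left_eq_self (μ := volume) (fun z : E => F z) a]

lemma hconst_aux : (((2 * Real.pi) ^ (-(n : ℝ) / 2) : ℝ) : ℂ) *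
    (((2 * Real.pi) ^ (-(n : ℝ) / 2) : ℝ) : ℂ) * (((2 * Real.pi) ^ n : ℝ) : ℂ) = 1 := by
  have hr : ((2 * Real.pi) ^ (-(n : ℝ) / 2) * (2 * Real.pi) ^ (-(n : ℝ) / 2) *
      (2 * Real.pi) ^ n : ℝ) = 1 := by
    rw [← Real.rpow_natCast (2 * Real.pi) n, ← Real.rpow_add two_pi_pos,
      ← Real.rpow_add two_pi_pos]
    rw [show -(n : ℝ) / 2 + -(n : ℝ) / 2 + (n : ℝ) = 0 by ring, Real.rpow_zero]
  rw [← Complex.ofReal_mul, ← Complex.ofReal_mul, hr, Complex.ofReal_one]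

lemma inner_step (φ₁ φ₂ f g : 𝓢(E, ℂ)) (η y x : E) :
    (∫ ξ : E, conj (STFT ⇑φ₁ ⇑f x ξ) * STFT ⇑φ₂ ⇑g x ξ *
        Complex.exp (-Complex.I * ((inner ℝ x η : ℝ) : ℂ) - Complex.I * ((inner ℝ ξ y : ℝ) : ℂ)))
      = ec (-⟪x, η⟫) *
          ∫ t : E, conj (f t) * φ₁ (t - x) * (g (t - y) * conj (φ₂ (t - y - x))) := by
  have e1 : ∀ ξ : E, conj (STFT ⇑φ₁ ⇑f x ξ) * STFT ⇑φ₂ ⇑g x ξ *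
        Complex.exp (-Complex.I * ((inner ℝ x η : ℝ) : ℂ) - Complex.I * ((inner ℝ ξ y : ℝ) : ℂ))
      = ((((2 * Real.pi) ^ (-(n : ℝ) / 2) : ℝ) : ℂ) *
          (((2 * Real.pi) ^ (-(n : ℝ) / 2) : ℝ) : ℂ) * ec (-⟪x, η⟫)) *
          (conj (FTu ⇑(wprod φ₁ f x) ξ) * FTu ⇑(wprod φ₂ g x) ξ * ec (-⟪ξ, y⟫)) := by
    intro ξ
    rw [stft_eq, stft_eq, exp_sub_I_mul, map_mul, Complex.conj_ofReal]
    ring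
  simp_rw [e1]
  rw [MeasureTheory.integral_const_mul, key_parseval]
  have e2 : ∀ t : E, conj ((wprod φ₁ f x) t) * (wprod φ₂ g x) (t - y)
      = conj (f t) * φ₁ (t - x) * (g (t - y) * conj (φ₂ (t - y - x))) := by
    intro t
    rw [wprod_apply, wprod_apply, map_mul, Complex.conj_conj]
  simp_rw [e2]
  generalize (∫ t : E, conj (f t) * φ₁ (t - x) * (g (t - y) * conj (φ₂ (t - y - x)))) = I
  have h := hconst_aux (n := n)
  linear_combination (ec (-⟪x, η⟫) * I) * h

lemma main_integrable (φ₁ φ₂ f g : 𝓢(E, ℂ)) (η y : E) :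
    Integrable (Function.uncurry fun (x : E) (t : E) =>
      ec (-⟪x, η⟫) * (conj (f t) * φ₁ (t - x) * (g (t - y) * conj (φ₂ (t - y - x)))))
      (volume.prod volume) := by
  apply Integrable.mono'
    (g := fun p : E × E => SchwartzMap.seminorm ℝ 0 0 g * SchwartzMap.seminorm ℝ 0 0 φ₂ *
      (‖f p.2‖ * ‖φ₁ (-(p.1 - p.2))‖))
  · apply Integrable.const_mul
    have hφ : Integrable (fun u : E => ‖φ₁ (-u)‖) := φ₁.integrable.norm.comp_neg
    have hf' : Integrable (fun t : E => ‖f t‖) := f.integrable.norm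
    have h := hf'.convolution_integrand (ContinuousLinearMap.lsmul ℝ ℝ) hφ
    simpa [ContinuousLinearMap.lsmul_apply, smul_eq_mul] using h
  · apply Continuous.aestronglyMeasurable
    apply Continuous.mul
    · exact continuous_ec.comp
        ((continuous_inner.comp (continuous_fst.prodMk continuous_const)).neg)
    apply Continuous.mul
    · exact (Complex.continuous_conj.comp (f.continuous.comp continuous_snd)).mul
        (φ₁.continuous.comp (continuous_snd.sub continuous_fst))
    · exact (g.continuous.comp (continuous_snd.sub continuous_const)).mul
        (Complex.continuous_conj.comp
          (φ₂.continuous.comp ((continuous_snd.sub continuous_const).sub continuous_fst)))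
  · apply Filter.Eventually.of_forall
    intro p
    simp only [Function.uncurry]
    have he : ‖ec (-⟪p.1, η⟫) * (conj (f p.2) * φ₁ (p.2 - p.1) *
        (g (p.2 - y) * conj (φ₂ (p.2 - y - p.1))))‖
        = ‖f p.2‖ * ‖φ₁ (p.2 - p.1)‖ * (‖g (p.2 - y)‖ * ‖φ₂ (p.2 - y - p.1)‖) := by
      rw [norm_mul, norm_ec, one_mul, norm_mul, norm_mul, norm_mul, RCLike.norm_conj,
        RCLike.norm_conj]
    rw [neg_sub, he]
    have h1 : ‖g (p.2 - y)‖ ≤ SchwartzMap.seminorm ℝ 0 0 g := g.norm_le_seminorm ℝ _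
    have h2 : ‖φ₂ (p.2 - y - p.1)‖ ≤ SchwartzMap.seminorm ℝ 0 0 φ₂ := φ₂.norm_le_seminorm ℝ _
    calc ‖f p.2‖ * ‖φ₁ (p.2 - p.1)‖ * (‖g (p.2 - y)‖ * ‖φ₂ (p.2 - y - p.1)‖)
        ≤ ‖f p.2‖ * ‖φ₁ (p.2 - p.1)‖ *
          (SchwartzMap.seminorm ℝ 0 0 g * SchwartzMap.seminorm ℝ 0 0 φ₂) := by
          gcongr <;> positivity
      _ = SchwartzMap.seminorm ℝ 0 0 g * SchwartzMap.seminorm ℝ 0 0 φ₂ *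
          (‖f p.2‖ * ‖φ₁ (p.2 - p.1)‖) := by ring

lemma rhs1 (φ₁ φ₂ : 𝓢(E, ℂ)) (η y : E) :
    STFT ⇑φ₂ ⇑φ₁ y (-η) = (((2 * Real.pi) ^ (-(n : ℝ) / 2) : ℝ) : ℂ) *
      (ec ⟪y, η⟫ * ∫ u : E, φ₁ (u + y) * conj (φ₂ u) * ec ⟪u, η⟫) := by
  rw [STFT]
  congr 1
  have e1 : ∀ t : E, φ₁ t * conj (φ₂ (t - y)) *
        Complex.exp (-Complex.I * ((inner ℝ t (-η) : ℝ) : ℂ))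
      = φ₁ t * conj (φ₂ (t - y)) * ec ⟪t, η⟫ := by
    intro t
    rw [inner_neg_right, Complex.ofReal_neg, exp_neg_I_mul_neg]
  simp_rw [e1]
  rw [← MeasureTheory.integral_add_right_eq_self
    (fun t : E => φ₁ t * conj (φ₂ (t - y)) * ec ⟪t, η⟫) y]
  rw [← MeasureTheory.integral_const_mul]
  congr 1
  ext u
  have h1 : u + y - y = u := by abel
  rw [h1, inner_add_left, ec_add]
  ring

lemma rhs2 (f g : 𝓢(E, ℂ)) (η y : E) :
    STFT ⇑f ⇑g (-y) η = (((2 * Real.pi) ^ (-(n : ℝ) / 2) : ℝ) : ℂ) *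
      (ec ⟪y, η⟫ * ∫ t : E, conj (f t) * g (t - y) * ec (-⟪t, η⟫)) := by
  rw [STFT]
  congr 1
  have e1 : ∀ s : E, g s * conj (f (s - -y)) *
        Complex.exp (-Complex.I * ((inner ℝ s η : ℝ) : ℂ))
      = g s * conj (f (s + y)) * ec (-⟪s, η⟫) := by
    intro s
    rw [sub_neg_eq_add, exp_neg_I_mul]
  simp_rw [e1]
  rw [← MeasureTheory.integral_sub_right_eq_self
    (fun s : E => g s * conj (f (s + y)) * ec (-⟪s, η⟫)) y]
  rw [← MeasureTheory.integral_const_mul]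
  congr 1
  ext t
  have h1 : t - y + y = t := by abel
  rw [h1, inner_sub_left]
  rw [show -(⟪t, η⟫ - ⟪y, η⟫) = -⟪t, η⟫ + ⟪y, η⟫ by ring, ec_add]
  ring


lemma hx_step (φ₁ φ₂ f g : 𝓢(E, ℂ)) (η y : E) (t : E) :
    (∫ x : E, ec (-⟪x, η⟫) * (conj (f t) * φ₁ (t - x) * (g (t - y) * conj (φ₂ (t - y - x)))))
      = conj (f t) * g (t - y) * ec (-⟪t, η⟫) *
          (ec ⟪y, η⟫ * ∫ u : E, φ₁ (u + y) * conj (φ₂ u) * ec ⟪u, η⟫) := by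
  have hsub : ∀ x : E, ec (-⟪x, η⟫) * (conj (f t) * φ₁ (t - x) * (g (t - y) * conj (φ₂ (t - y - x))))
      = (fun u : E => ec (-⟪t - y - u, η⟫) *
          (conj (f t) * φ₁ (u + y) * (g (t - y) * conj (φ₂ u)))) (t - y - x) := by
    intro x
    simp only
    have h1 : t - y - (t - y - x) = x := by abel
    have h2 : t - y - x + y = t - x := by abel
    rw [h1, h2]
  simp_rw [hsub]
  rw [integral_comp_sub_left (fun u : E => ec (-⟪t - y - u, η⟫) *
    (conj (f t) * φ₁ (u + y) * (g (t - y) * conj (φ₂ u)))) (t - y)]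
  have he : ∀ u : E, ec (-⟪t - y - u, η⟫) * (conj (f t) * φ₁ (u + y) * (g (t - y) * conj (φ₂ u)))
      = (conj (f t) * g (t - y) * ec (-⟪t, η⟫) * ec ⟪y, η⟫) *
          (φ₁ (u + y) * conj (φ₂ u) * ec ⟪u, η⟫) := by
    intro u
    have harg : -⟪t - y - u, η⟫ = -⟪t, η⟫ + (⟪y, η⟫ + ⟪u, η⟫) := by
      rw [inner_sub_left, inner_sub_left]
      ring
    rw [harg, ec_add, ec_add]
    ring
  simp_rw [he]
  rw [MeasureTheory.integral_const_mul]
  ring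

end STFTProof

open MeasureTheory ComplexConjugate in
theorem stmt_11 {n : ℕ} (φ₁ φ₂ f g : SchwartzMap (EuclideanSpace ℝ (Fin n)) ℂ) :
    ∀ η y : EuclideanSpace ℝ (Fin n),
      ((2 * Real.pi) ^ (-(n : ℝ)) : ℝ) *
          (∫ x : EuclideanSpace ℝ (Fin n), ∫ ξ : EuclideanSpace ℝ (Fin n),
            conj (STFT (⇑φ₁) (⇑f) x ξ) * STFT (⇑φ₂) (⇑g) x ξ *
              Complex.exp (-Complex.I * ((inner ℝ x η : ℝ) : ℂ) -
                Complex.I * ((inner ℝ ξ y : ℝ) : ℂ))) =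
        Complex.exp (-Complex.I * ((inner ℝ y η : ℝ) : ℂ)) *
          STFT (⇑φ₂) (⇑φ₁) y (-η) * STFT (⇑f) (⇑g) (-y) η := by
  intro η y
  have hL : (∫ x : EuclideanSpace ℝ (Fin n), ∫ ξ : EuclideanSpace ℝ (Fin n),
        conj (STFT (⇑φ₁) (⇑f) x ξ) * STFT (⇑φ₂) (⇑g) x ξ *
          Complex.exp (-Complex.I * ((inner ℝ x η : ℝ) : ℂ) -
            Complex.I * ((inner ℝ ξ y : ℝ) : ℂ)))
      = ∫ x : EuclideanSpace ℝ (Fin n), ∫ t : EuclideanSpace ℝ (Fin n),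
          STFTProof.ec (-(inner ℝ x η : ℝ)) *
            (conj (f t) * φ₁ (t - x) * (g (t - y) * conj (φ₂ (t - y - x)))) := by
    congr 1
    funext x
    rw [STFTProof.inner_step φ₁ φ₂ f g η y x, ← MeasureTheory.integral_const_mul]
  rw [hL, MeasureTheory.integral_integral_swap (STFTProof.main_integrable φ₁ φ₂ f g η y)]
  have hL2 : (∫ t : EuclideanSpace ℝ (Fin n), ∫ x : EuclideanSpace ℝ (Fin n),
        STFTProof.ec (-(inner ℝ x η : ℝ)) *
          (conj (f t) * φ₁ (t - x) * (g (t - y) * conj (φ₂ (t - y - x)))))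
      = ∫ t : EuclideanSpace ℝ (Fin n),
          conj (f t) * g (t - y) * STFTProof.ec (-(inner ℝ t η : ℝ)) *
            (STFTProof.ec (inner ℝ y η : ℝ) *
              ∫ u : EuclideanSpace ℝ (Fin n),
                φ₁ (u + y) * conj (φ₂ u) * STFTProof.ec (inner ℝ u η : ℝ)) := by
    congr 1
    funext t
    exact STFTProof.hx_step φ₁ φ₂ f g η y t
  rw [hL2, MeasureTheory.integral_mul_const]
  rw [STFTProof.rhs1 φ₁ φ₂ η y, STFTProof.rhs2 f g η y, STFTProof.exp_neg_I_mul]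
  set A : ℂ := ∫ t : EuclideanSpace ℝ (Fin n),
    conj (f t) * g (t - y) * STFTProof.ec (-(inner ℝ t η : ℝ)) with hA
  set B : ℂ := ∫ u : EuclideanSpace ℝ (Fin n),
    φ₁ (u + y) * conj (φ₂ u) * STFTProof.ec (inner ℝ u η : ℝ) with hB
  set X : ℂ := STFTProof.ec (inner ℝ y η : ℝ) with hX
  set X' : ℂ := STFTProof.ec (-(inner ℝ y η : ℝ)) with hX'
  set D : ℂ := (((2 * Real.pi) ^ (-(n : ℝ) / 2) : ℝ) : ℂ) with hD
  have hc2 : D * D = (((2 * Real.pi) ^ (-(n : ℝ)) : ℝ) : ℂ) := by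
    rw [hD, ← Complex.ofReal_mul, ← Real.rpow_add STFTProof.two_pi_pos]
    norm_num
  have hee : X * X' = 1 := by
    rw [hX, hX', ← STFTProof.ec_add, add_neg_cancel, STFTProof.ec_zero]
  linear_combination (-(A * X * B)) * hc2 + (-(D * D * X * A * B)) * hee
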